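/- arXiv:2205.00989 — 6 statements merged into one kernel-verified Lean document; each statement's English description precedes it below -/
import Mathlib

section
/- Let τ' and τ be two topologies on a set A such that: (1) both (A,τ') and (A,τ) are sequential topological spaces, (2) τ is finer than τ' (i.e., τ' ⊆ τ), (3) every subset of A that is relatively compact for τ' is relatively compact for τ, and (4) (A,τ') is Hausdorff. Then τ = τ'. -/
/-- Comparable sequential topologies with matching relatively compact sets,
the coarser one Hausdorff, must agree. -/
theorem stmt0 {A : Type*} (τ' τ : TopologicalSpace A)
    (hseq' : @SequentialSpace A τ') (hseq : @SequentialSpace A τ)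
    (hfiner : τ ≤ τ')
    (hcomp : ∀ M : Set A, @IsCompact A τ' (@closure A τ' M) →
      @IsCompact A τ (@closure A τ M))
    (hT2 : @T2Space A τ') :
    τ = τ' := by
  refine le_antisymm hfiner ?_
  rw [← @continuous_id_iff_le A τ' τ]
  refine @SeqContinuous.continuous A A τ' τ hseq' id ?_
  intro u p hup
  set M : Set A := insert p (Set.range u) with hM
  have hMc : @IsCompact A τ' M := @Filter.Tendsto.isCompact_insert_range A τ' u p hup
  have hMcl : @IsClosed A τ' M := @IsCompact.isClosed A τ' hT2 M hMc
  have hclM : @closure A τ' M = M := @IsClosed.closure_eq A τ' M hMcl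
  have hKc : @IsCompact A τ (@closure A τ M) := hcomp M (by rw [hclM]; exact hMc)
  set K : Set A := @closure A τ M with hK
  letI tK : TopologicalSpace K := τ.induced Subtype.val
  letI tK' : TopologicalSpace K := τ'.induced Subtype.val
  have hle : tK ≤ tK' := induced_mono hfiner
  haveI hKcs : @CompactSpace K tK := (@isCompact_iff_compactSpace A τ K).mp hKc
  haveI hKt2 : @T2Space K tK' :=
    @Topology.IsEmbedding.t2Space K A tK' τ' hT2 Subtype.val
      (@Topology.IsEmbedding.subtypeVal A τ' K)
  have hcont : @Continuous K K tK tK' ⇑(Equiv.refl K) :=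
    (@continuous_id_iff_le K tK tK').mpr hle
  have heq : tK' ≤ tK := by
    refine (@continuous_id_iff_le K tK' tK).mp ?_
    rw [@continuous_iff_isClosed K K tK' tK id]
    intro s hs
    have h1 : @IsCompact K tK s := @IsClosed.isCompact K tK s hKcs hs
    have h2 : @IsCompact K tK' s := by
      have := @IsCompact.image K K tK tK' s id h1 hcont
      simpa using this
    exact @IsCompact.isClosed K tK' hKt2 s h2
  have hup' : ∀ n, u n ∈ K := fun n =>
    (@subset_closure A τ M) (Set.mem_insert_iff.mpr (Or.inr ⟨n, rfl⟩))
  have hpK : p ∈ K := (@subset_closure A τ M) (Set.mem_insert _ _)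
  let v : ℕ → K := fun n => (⟨u n, hup' n⟩ : K)
  let p' : K := ⟨p, hpK⟩
  have hv' : Filter.Tendsto v Filter.atTop (@nhds K tK' p') := by
    rw [@Topology.IsEmbedding.tendsto_nhds_iff K A ℕ Subtype.val tK' τ' v Filter.atTop p'
      (@Topology.IsEmbedding.subtypeVal A τ' K)]
    exact hup
  have hv : Filter.Tendsto v Filter.atTop (@nhds K tK p') :=
    hv'.mono_right (@nhds_mono K tK' tK p' heq)
  have hfin : Filter.Tendsto (Subtype.val ∘ v) Filter.atTop (@nhds A τ p) :=
    Filter.Tendsto.comp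
      (@Continuous.tendsto K A tK τ Subtype.val (@continuous_subtype_val A τ K) p') hv
  exact hfin
end

section
/- Let τ' and τ be two topologies on a set A with τ' ⊆ τ, such that (A,τ') is Hausdorff, every τ'-relatively compact set is τ-relatively compact, and both spaces are sequential. Then any sequence in A that converges to y in (A,τ') also converges to y in (A,τ). -/
/-- If τ' ⊆ τ, (A,τ') Hausdorff, τ'-relatively compact sets are τ-relatively
compact, and both topologies sequential, then τ'-convergent sequences are
τ-convergent (to the same limit). -/
theorem stmt1 {A : Type*} (τ' τ : TopologicalSpace A)
    (hseq' : @SequentialSpace A τ') (hseq : @SequentialSpace A τ)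
    (hfiner : τ ≤ τ')
    (hcomp : ∀ M : Set A, @IsCompact A τ' (@closure A τ' M) →
      @IsCompact A τ (@closure A τ M))
    (hT2 : @T2Space A τ')
    (u : ℕ → A) (y : A)
    (hconv : Filter.Tendsto u Filter.atTop (@nhds A τ' y)) :
    Filter.Tendsto u Filter.atTop (@nhds A τ y) := by
  classical
  set M : Set A := insert y (Set.range u) with hM
  -- M is τ'-compact, hence τ'-closed, hence its τ'-closure is compact
  have hMc : @IsCompact A τ' M := by
    letI := τ'
    haveI := hT2
    exact hconv.isCompact_insert_range
  have hMcl : @closure A τ' M = M := by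
    letI := τ'
    haveI := hT2
    exact hMc.isClosed.closure_eq
  have hKc : @IsCompact A τ (@closure A τ M) := by
    apply hcomp
    rw [hMcl]; exact hMc
  set K : Set A := @closure A τ M with hK
  have hMsub : M ⊆ K := by
    letI := τ
    exact subset_closure
  have huK : ∀ n, u n ∈ K := fun n => hMsub (Set.mem_insert_of_mem _ ⟨n, rfl⟩)
  have hyK : y ∈ K := hMsub (Set.mem_insert _ _)
  -- consider the two subspace topologies on K
  set t1 : TopologicalSpace K := τ.induced Subtype.val with ht1
  set t2 : TopologicalSpace K := τ'.induced Subtype.val with ht2d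
  have hle : t1 ≤ t2 := induced_mono hfiner
  have hcs : @CompactSpace K t1 := by
    letI := τ
    rw [← isCompact_iff_compactSpace]
    exact hKc
  have ht2 : @T2Space K t2 := by
    letI := τ'
    haveI := hT2
    exact inferInstanceAs (T2Space K)
  -- id : (K, t1) → (K, t2) is a continuous bijection from compact to T2,
  -- hence a homeomorphism, so t1 = t2
  have hcont : @Continuous K K t1 t2 id := continuous_id_iff_le.mpr hle
  have hle2 : t2 ≤ t1 := by
    have hsc := @Continuous.continuous_symm_of_equiv_compact_to_t2 K K t1 t2 hcs ht2
      (Equiv.refl K) hcont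
    have h2 : @Continuous K K t2 t1 id := hsc
    exact continuous_id_iff_le.mp h2
  have heq : t1 = t2 := le_antisymm hle hle2
  -- lift the sequence to K
  set v : ℕ → K := fun n => ⟨u n, huK n⟩ with hv
  set y' : K := ⟨y, hyK⟩ with hy'
  have hconv2 : Filter.Tendsto v Filter.atTop (@nhds K t2 y') := by
    have hn : @nhds K t2 y' = Filter.comap Subtype.val (@nhds A τ' y) :=
      @nhds_induced A K τ' Subtype.val y'
    rw [hn, Filter.tendsto_comap_iff]
    exact hconv
  rw [← heq] at hconv2
  have hvalcont : @Continuous K A t1 τ Subtype.val := by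
    rw [ht1]
    exact continuous_induced_dom
  have h3 : Filter.Tendsto (Subtype.val ∘ v) Filter.atTop (@nhds A τ (y' : A)) :=
    Filter.Tendsto.comp (@Continuous.tendsto K A t1 τ Subtype.val hvalcont y') hconv2
  exact h3
end

section
/- Let Y₁, Y₂, Y₃ be bounded real-valued random variables on a probability space forming a martingale with respect to a filtration (𝒢₁ ⊆ 𝒢₂ ⊆ 𝒢₃), i.e., Yᵢ is 𝒢ᵢ-measurable and E[Y_{i+1} | 𝒢ᵢ] = Yᵢ for i = 1,2. If Y₁ and Y₃ have the same distribution, then Y₁ = Y₂ = Y₃ almost surely. -/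
open MeasureTheory

lemma bdd_integrable {Ω : Type*} [mΩ : MeasurableSpace Ω] (P : Measure Ω)
    [IsProbabilityMeasure P] (f : Ω → ℝ) (C : ℝ) (hb : ∀ ω, |f ω| ≤ C)
    (hm : Measurable f) : Integrable f P := by
  refine (integrable_const C).mono' hm.aestronglyMeasurable (ae_of_all _ ?_)
  intro ω; simpa using hb ω

lemma mul_step {Ω : Type*} [mΩ : MeasurableSpace Ω] (P : Measure Ω)
    [IsProbabilityMeasure P] (m : MeasurableSpace Ω) (hm : m ≤ mΩ)
    (f g : Ω → ℝ) (hmf : Measurable[m] f)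
    (hig : Integrable g P) (hifg : Integrable (f * g) P)
    (hmart : P[g|m] =ᵐ[P] f) :
    ∫ ω, f ω * g ω ∂P = ∫ ω, f ω * f ω ∂P := by
  have h1 : ∫ ω, (P[(f * g)|m]) ω ∂P = ∫ ω, (f * g) ω ∂P := integral_condExp hm
  have h2 : P[(f * g)|m] =ᵐ[P] f * P[g|m] :=
    condExp_mul_of_stronglyMeasurable_left hmf.stronglyMeasurable hifg hig
  have h3 : f * P[g|m] =ᵐ[P] f * f := hmart.mono fun ω h => by
    simp only [Pi.mul_apply, h]
  calc ∫ ω, f ω * g ω ∂P = ∫ ω, (P[(f * g)|m]) ω ∂P := h1.symm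
    _ = ∫ ω, f ω * f ω ∂P := integral_congr_ae (h2.trans h3)

/-- A bounded three-step real martingale whose first and last terms have the
same distribution is a.s. constant. -/
theorem stmt2 {Ω : Type*} [mΩ : MeasurableSpace Ω] (P : Measure Ω)
    [IsProbabilityMeasure P]
    (G1 G2 G3 : MeasurableSpace Ω) (h12 : G1 ≤ G2) (h23 : G2 ≤ G3) (h3 : G3 ≤ mΩ)
    (Y1 Y2 Y3 : Ω → ℝ) (C : ℝ)
    (hb1 : ∀ ω, |Y1 ω| ≤ C) (hb2 : ∀ ω, |Y2 ω| ≤ C) (hb3 : ∀ ω, |Y3 ω| ≤ C)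
    (hm1 : Measurable[G1] Y1) (hm2 : Measurable[G2] Y2) (hm3 : Measurable[G3] Y3)
    (hmart1 : P[Y2|G1] =ᵐ[P] Y1) (hmart2 : P[Y3|G2] =ᵐ[P] Y2)
    (hdist : @Measure.map Ω ℝ mΩ _ Y1 P = @Measure.map Ω ℝ mΩ _ Y3 P) :
    Y1 =ᵐ[P] Y2 ∧ Y2 =ᵐ[P] Y3 := by
  have h1 : G1 ≤ mΩ := h12.trans (h23.trans h3)
  have h2 : G2 ≤ mΩ := h23.trans h3
  have hM1 : Measurable[mΩ] Y1 := hm1.mono h1 le_rfl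
  have hM2 : Measurable[mΩ] Y2 := hm2.mono h2 le_rfl
  have hM3 : Measurable[mΩ] Y3 := hm3.mono h3 le_rfl
  have hΩ : Nonempty Ω := Measure.nonempty_of_neZero P
  have hC : (0:ℝ) ≤ C := le_trans (abs_nonneg _) (hb1 (Classical.arbitrary Ω))
  -- boundedness of products
  have hprod : ∀ (f g : Ω → ℝ), (∀ ω, |f ω| ≤ C) → (∀ ω, |g ω| ≤ C) →
      Measurable[mΩ] f → Measurable[mΩ] g → Integrable (f * g) P := by
    intro f g hbf hbg hf hg
    refine bdd_integrable (mΩ := mΩ) P (f * g) (C * C) (fun ω => ?_) (hf.mul hg)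
    simpa [abs_mul] using mul_le_mul (hbf ω) (hbg ω) (abs_nonneg _) hC
  have hi2 : Integrable Y2 P := bdd_integrable (mΩ := mΩ) P Y2 C hb2 hM2
  have hi3 : Integrable Y3 P := bdd_integrable (mΩ := mΩ) P Y3 C hb3 hM3
  -- orthogonality identities
  have e1 : ∫ ω, Y1 ω * Y2 ω ∂P = ∫ ω, Y1 ω * Y1 ω ∂P :=
    mul_step (mΩ := mΩ) P G1 h1 Y1 Y2 hm1 hi2 (hprod Y1 Y2 hb1 hb2 hM1 hM2) hmart1
  have e2 : ∫ ω, Y2 ω * Y3 ω ∂P = ∫ ω, Y2 ω * Y2 ω ∂P :=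
    mul_step (mΩ := mΩ) P G2 h2 Y2 Y3 hm2 hi3 (hprod Y2 Y3 hb2 hb3 hM2 hM3) hmart2
  -- equal second moments
  have esq : ∫ ω, Y1 ω * Y1 ω ∂P = ∫ ω, Y3 ω * Y3 ω ∂P := by
    have hsm : AEStronglyMeasurable (fun x : ℝ => x * x) (@Measure.map Ω ℝ mΩ _ Y1 P) :=
      (measurable_id.mul measurable_id).aestronglyMeasurable
    have hsm' : AEStronglyMeasurable (fun x : ℝ => x * x) (@Measure.map Ω ℝ mΩ _ Y3 P) :=
      (measurable_id.mul measurable_id).aestronglyMeasurable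
    calc ∫ ω, Y1 ω * Y1 ω ∂P = ∫ x, x * x ∂(@Measure.map Ω ℝ mΩ _ Y1 P) :=
          (integral_map hM1.aemeasurable hsm).symm
      _ = ∫ x, x * x ∂(@Measure.map Ω ℝ mΩ _ Y3 P) := by rw [hdist]
      _ = ∫ ω, Y3 ω * Y3 ω ∂P := integral_map hM3.aemeasurable hsm'
  -- the squared differences
  have key : ∀ (f g : Ω → ℝ), (∀ ω, |f ω| ≤ C) → (∀ ω, |g ω| ≤ C) →
      Measurable[mΩ] f → Measurable[mΩ] g →
      (∫ ω, f ω * g ω ∂P = ∫ ω, f ω * f ω ∂P) →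
      ∫ ω, (g ω - f ω) ^ 2 ∂P = ∫ ω, g ω * g ω ∂P - ∫ ω, f ω * f ω ∂P := by
    intro f g hbf hbg hf hg he
    have iff' := hprod f f hbf hbf hf hf
    have igg := hprod g g hbg hbg hg hg
    have ifg := hprod f g hbf hbg hf hg
    have hcong : ∫ ω, (g ω - f ω) ^ 2 ∂P
        = ∫ ω, (g ω * g ω - 2 * (f ω * g ω)) + f ω * f ω ∂P :=
      integral_congr_ae (ae_of_all _ fun ω => by ring)
    have hA : ∫ ω, (g ω * g ω - 2 * (f ω * g ω)) + f ω * f ω ∂P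
        = (∫ ω, g ω * g ω - 2 * (f ω * g ω) ∂P) + ∫ ω, f ω * f ω ∂P :=
      integral_add (igg.sub (ifg.const_mul 2)) iff'
    have hB : ∫ ω, g ω * g ω - 2 * (f ω * g ω) ∂P
        = (∫ ω, g ω * g ω ∂P) - ∫ ω, 2 * (f ω * g ω) ∂P :=
      integral_sub igg (ifg.const_mul 2)
    have hCm : ∫ ω, 2 * (f ω * g ω) ∂P = 2 * ∫ ω, f ω * g ω ∂P :=
      integral_const_mul 2 _
    rw [hcong, hA, hB, hCm, he]; ring
  have k1 := key Y1 Y2 hb1 hb2 hM1 hM2 e1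
  have k2 := key Y2 Y3 hb2 hb3 hM2 hM3 e2
  -- integrability of squared differences
  have hsqint : ∀ (f g : Ω → ℝ), (∀ ω, |f ω| ≤ C) → (∀ ω, |g ω| ≤ C) →
      Measurable[mΩ] f → Measurable[mΩ] g →
      Integrable (fun ω => (g ω - f ω) ^ 2) P := by
    intro f g hbf hbg hf hg
    refine bdd_integrable (mΩ := mΩ) P _ ((2*C)^2) (fun ω => ?_) ((hg.sub hf).pow_const 2)
    rw [abs_pow, sq_abs]
    have hd : |g ω - f ω| ≤ 2 * C := by
      calc |g ω - f ω| ≤ |g ω| + |f ω| := abs_sub _ _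
        _ ≤ C + C := add_le_add (hbg ω) (hbf ω)
        _ = 2 * C := by ring
    calc (g ω - f ω)^2 = |g ω - f ω|^2 := (sq_abs _).symm
      _ ≤ (2 * C)^2 := pow_le_pow_left₀ (abs_nonneg _) hd 2
  have hi21 := hsqint Y1 Y2 hb1 hb2 hM1 hM2
  have hi32 := hsqint Y2 Y3 hb2 hb3 hM2 hM3
  have hpos1 : 0 ≤ ∫ ω, (Y2 ω - Y1 ω) ^ 2 ∂P := integral_nonneg fun ω => sq_nonneg _
  have hpos2 : 0 ≤ ∫ ω, (Y3 ω - Y2 ω) ^ 2 ∂P := integral_nonneg fun ω => sq_nonneg _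
  have hsum : (∫ ω, (Y2 ω - Y1 ω) ^ 2 ∂P) + ∫ ω, (Y3 ω - Y2 ω) ^ 2 ∂P = 0 := by
    rw [k1, k2, esq]; ring
  have hz1 : ∫ ω, (Y2 ω - Y1 ω) ^ 2 ∂P = 0 := by linarith
  have hz2 : ∫ ω, (Y3 ω - Y2 ω) ^ 2 ∂P = 0 := by linarith
  have hae1 : (fun ω => (Y2 ω - Y1 ω) ^ 2) =ᵐ[P] 0 :=
    (integral_eq_zero_iff_of_nonneg (fun ω => sq_nonneg _) hi21).mp hz1
  have hae2 : (fun ω => (Y3 ω - Y2 ω) ^ 2) =ᵐ[P] 0 :=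
    (integral_eq_zero_iff_of_nonneg (fun ω => sq_nonneg _) hi32).mp hz2
  constructor
  · filter_upwards [hae1] with ω h
    have := pow_eq_zero_iff (n := 2) (by norm_num) |>.mp h
    linarith [sub_eq_zero.mp this]
  · filter_upwards [hae2] with ω h
    have := pow_eq_zero_iff (n := 2) (by norm_num) |>.mp h
    linarith [sub_eq_zero.mp this]
end

section
/- Let X₁, X₂, X₃ be measure-valued martingales with values in P(𝒳) for a Polish space 𝒳, with respect to a common filtration, meaning that for every bounded continuous f : 𝒳 → ℝ, the real-valued process (X₁(f), X₂(f), X₃(f)) is a bounded martingale. If X₁ and X₃ have the same law (as P(𝒳)-valued random variables), then X₁ = X₂ = X₃ almost surely. -/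
open MeasureTheory BoundedContinuousFunction

open scoped NNReal ENNReal Topology

section Aux

variable {𝒳 : Type*}

/-- Convert an `ℝ≥0`-valued bounded continuous function into an `ℝ`-valued one. -/
noncomputable def toRealBCF [TopologicalSpace 𝒳] (g : 𝒳 →ᵇ ℝ≥0) : 𝒳 →ᵇ ℝ :=
  BoundedContinuousFunction.comp _ (isometry_subtype_coe.lipschitz) g

lemma toRealBCF_apply [TopologicalSpace 𝒳] (g : 𝒳 →ᵇ ℝ≥0) (x : 𝒳) :
    toRealBCF g x = (g x : ℝ) := rfl

lemma lint_eq [TopologicalSpace 𝒳] [MeasurableSpace 𝒳] [OpensMeasurableSpace 𝒳]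
    {μ ν : Measure 𝒳} [IsFiniteMeasure μ] [IsFiniteMeasure ν] (g : 𝒳 →ᵇ ℝ≥0)
    (h : ∫ x, toRealBCF g x ∂μ = ∫ x, toRealBCF g x ∂ν) :
    ∫⁻ x, g x ∂μ = ∫⁻ x, g x ∂ν := by
  have h1 := g.toReal_lintegral_coe_eq_integral μ
  have h2 := g.toReal_lintegral_coe_eq_integral ν
  have : (∫⁻ x, g x ∂μ).toReal = (∫⁻ x, g x ∂ν).toReal := by
    rw [h1, h2]; simpa [toRealBCF_apply] using h
  exact (ENNReal.toReal_eq_toReal_iff' (g.lintegral_lt_top_of_nnreal μ).ne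
    (g.lintegral_lt_top_of_nnreal ν).ne).mp this

lemma meas_eq [TopologicalSpace 𝒳] [MeasurableSpace 𝒳] [OpensMeasurableSpace 𝒳]
    [HasOuterApproxClosed 𝒳] {μ ν : Measure 𝒳} [IsFiniteMeasure μ] [IsFiniteMeasure ν]
    {F : Set 𝒳} (hF : IsClosed F)
    (h : ∀ n : ℕ, ∫ x, toRealBCF (hF.apprSeq n) x ∂μ = ∫ x, toRealBCF (hF.apprSeq n) x ∂ν) :
    μ F = ν F := by
  have t1 := HasOuterApproxClosed.tendsto_lintegral_apprSeq hF μ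
  have t2 := HasOuterApproxClosed.tendsto_lintegral_apprSeq hF ν
  have l : ∀ n : ℕ, ∫⁻ x, hF.apprSeq n x ∂μ = ∫⁻ x, hF.apprSeq n x ∂ν :=
    fun n => lint_eq _ (h n)
  simp_rw [l] at t1
  exact tendsto_nhds_unique t1 t2

/-- A countable π-system of closed sets generating the Borel σ-algebra of a separable
metric space. -/
lemma exists_separating [MetricSpace 𝒳] [TopologicalSpace.SeparableSpace 𝒳]
    [MeasurableSpace 𝒳] [BorelSpace 𝒳] :
    ∃ S : Set (Set 𝒳), S.Countable ∧ IsPiSystem S ∧ (∀ F ∈ S, IsClosed F) ∧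
      ‹MeasurableSpace 𝒳› = MeasurableSpace.generateFrom S := by
  obtain ⟨s, hsc, hsd⟩ := TopologicalSpace.exists_countable_dense 𝒳
  haveI := hsc.to_subtype
  set B : ↥s × ℚ → Set 𝒳 := fun p => Metric.closedBall (p.1 : 𝒳) p.2 with hB
  set S : Set (Set 𝒳) := Set.range (fun T : Finset (↥s × ℚ) => ⋂ p ∈ T, B p) with hS
  have hBS : ∀ p : ↥s × ℚ, B p ∈ S := by
    intro p
    refine ⟨{p}, ?_⟩
    simp
  have Sclosed : ∀ F ∈ S, IsClosed F := by
    rintro F ⟨T, rfl⟩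
    exact isClosed_biInter fun p _ => Metric.isClosed_closedBall
  refine ⟨S, Set.countable_range _, ?_, Sclosed, ?_⟩
  · rintro A ⟨T₁, rfl⟩ Bs ⟨T₂, rfl⟩ _
    classical
    refine ⟨T₁ ∪ T₂, ?_⟩
    ext x
    simp only [Set.mem_iInter, Finset.mem_union, Set.mem_inter_iff]
    constructor
    · intro h
      exact ⟨fun p hp => h p (Or.inl hp), fun p hp => h p (Or.inr hp)⟩
    · rintro ⟨hA, hBs⟩ p (hp | hp)
      exacts [hA p hp, hBs p hp]
  · refine le_antisymm ?_ (MeasurableSpace.generateFrom_le fun F hF => (Sclosed F hF).measurableSet)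
    rw [BorelSpace.measurable_eq (α := 𝒳), borel_eq_generateFrom_isClosed]
    refine MeasurableSpace.generateFrom_le fun F hF => ?_
    have key : F = ⋂ (q : ℚ) (_ : 0 < q), ⋃ (c : ↥s)
        (_ : (Metric.closedBall (c : 𝒳) q ∩ F).Nonempty), Metric.closedBall (c : 𝒳) q := by
      apply Set.Subset.antisymm
      · intro x hx
        simp only [Set.mem_iInter, Set.mem_iUnion]
        intro q hq
        obtain ⟨y, hy, hxy⟩ := Metric.mem_closure_iff.mp (hsd x) q (by exact_mod_cast hq)
        refine ⟨⟨y, hy⟩, ⟨x, ?_, hx⟩, ?_⟩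
        · exact Metric.mem_closedBall.mpr (le_of_lt hxy)
        · exact Metric.mem_closedBall.mpr (le_of_lt hxy)
      · intro x hx
        simp only [Set.mem_iInter, Set.mem_iUnion] at hx
        rw [← hF.closure_eq]
        rw [Metric.mem_closure_iff]
        intro ε hε
        obtain ⟨q, hq0, hqε⟩ := exists_rat_btwn (half_pos hε)
        have hq0' : (0 : ℚ) < q := by exact_mod_cast hq0
        obtain ⟨c, ⟨y, hyb, hyF⟩, hxc⟩ := hx q hq0'
        refine ⟨y, hyF, ?_⟩
        have d1 : dist x (c : 𝒳) ≤ q := Metric.mem_closedBall.mp hxc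
        have d2 : dist y (c : 𝒳) ≤ q := Metric.mem_closedBall.mp hyb
        calc dist x y ≤ dist x (c : 𝒳) + dist (c : 𝒳) y := dist_triangle _ _ _
          _ ≤ q + q := by rw [dist_comm (c : 𝒳) y]; exact add_le_add d1 d2
          _ < ε / 2 + ε / 2 := by exact add_lt_add hqε hqε
          _ = ε := add_halves ε
    rw [key]
    refine MeasurableSet.iInter fun q => MeasurableSet.iInter fun _ =>
      MeasurableSet.iUnion fun c => MeasurableSet.iUnion fun _ =>
        MeasurableSpace.measurableSet_generateFrom (hBS (c, q))

end Aux

/-- Three measure-valued martingales (w.r.t. a common filtration) on a Polish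
space such that the first and third have the same law agree almost surely. -/
theorem stmt5 {𝒳 : Type*} [TopologicalSpace 𝒳] [PolishSpace 𝒳]
    [MeasurableSpace 𝒳] [BorelSpace 𝒳]
    {Ω : Type*} [mΩ : MeasurableSpace Ω] (P : Measure Ω) [IsProbabilityMeasure P]
    (G1 G2 G3 : MeasurableSpace Ω) (h12 : G1 ≤ G2) (h23 : G2 ≤ G3) (h3 : G3 ≤ mΩ)
    (X1 X2 X3 : Ω → ProbabilityMeasure 𝒳)
    (hm1 : @Measurable Ω (ProbabilityMeasure 𝒳) G1 (borel _) X1)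
    (hm2 : @Measurable Ω (ProbabilityMeasure 𝒳) G2 (borel _) X2)
    (hm3 : @Measurable Ω (ProbabilityMeasure 𝒳) G3 (borel _) X3)
    (hmart1 : ∀ f : 𝒳 →ᵇ ℝ,
      P[(fun ω => ∫ x, f x ∂(X2 ω : Measure 𝒳))|G1]
        =ᵐ[P] fun ω => ∫ x, f x ∂(X1 ω : Measure 𝒳))
    (hmart2 : ∀ f : 𝒳 →ᵇ ℝ,
      P[(fun ω => ∫ x, f x ∂(X3 ω : Measure 𝒳))|G2]
        =ᵐ[P] fun ω => ∫ x, f x ∂(X2 ω : Measure 𝒳))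
    (hdist : @Measure.map Ω (ProbabilityMeasure 𝒳) mΩ (borel _) X1 P
      = @Measure.map Ω (ProbabilityMeasure 𝒳) mΩ (borel _) X3 P) :
    X1 =ᵐ[P] X2 ∧ X2 =ᵐ[P] X3 := by
  letI : MeasurableSpace (ProbabilityMeasure 𝒳) := borel _
  haveI : BorelSpace (ProbabilityMeasure 𝒳) := ⟨rfl⟩
  have h1m : G1 ≤ mΩ := h12.trans (h23.trans h3)
  have h2m : G2 ≤ mΩ := h23.trans h3
  have key : ∀ f : 𝒳 →ᵇ ℝ,
      ((fun ω => ∫ x, f x ∂(X1 ω : Measure 𝒳)) =ᵐ[P] fun ω => ∫ x, f x ∂(X2 ω : Measure 𝒳)) ∧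
      ((fun ω => ∫ x, f x ∂(X1 ω : Measure 𝒳)) =ᵐ[P] fun ω => ∫ x, f x ∂(X3 ω : Measure 𝒳)) := by
    intro f
    have φc : Continuous (fun p : ProbabilityMeasure 𝒳 => ∫ x, f x ∂(p : Measure 𝒳)) :=
      ProbabilityMeasure.continuous_integral_boundedContinuousFunction f
    set Y1 : Ω → ℝ := fun ω => ∫ x, f x ∂(X1 ω : Measure 𝒳) with hY1
    set Y2 : Ω → ℝ := fun ω => ∫ x, f x ∂(X2 ω : Measure 𝒳) with hY2
    set Y3 : Ω → ℝ := fun ω => ∫ x, f x ∂(X3 ω : Measure 𝒳) with hY3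
    have mφ : Measurable (fun p : ProbabilityMeasure 𝒳 => ∫ x, f x ∂(p : Measure 𝒳)) :=
      φc.measurable
    have mY1 : Measurable[G1] Y1 := mφ.comp hm1
    have mY2 : Measurable[G2] Y2 := mφ.comp hm2
    have mY3 : Measurable[G3] Y3 := mφ.comp hm3
    have bY1 : ∀ ω, ‖Y1 ω‖ ≤ ‖f‖ := fun ω => f.norm_integral_le_norm _
    have bY2 : ∀ ω, ‖Y2 ω‖ ≤ ‖f‖ := fun ω => f.norm_integral_le_norm _
    have bY3 : ∀ ω, ‖Y3 ω‖ ≤ ‖f‖ := fun ω => f.norm_integral_le_norm _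
    have hint : ∀ (Y : Ω → ℝ) (c : ℝ), @Measurable Ω ℝ mΩ _ Y → (∀ ω, ‖Y ω‖ ≤ c) → Integrable Y P :=
      fun Y c hm hb => (integrable_const (μ := P) c).mono' (hm.aestronglyMeasurable (μ := P)) (ae_of_all _ hb)
    have hintmul : ∀ (Y Z : Ω → ℝ), @Measurable Ω ℝ mΩ _ Y → @Measurable Ω ℝ mΩ _ Z → (∀ ω, ‖Y ω‖ ≤ ‖f‖) →
        (∀ ω, ‖Z ω‖ ≤ ‖f‖) → Integrable (fun ω => Y ω * Z ω) P := by
      intro Y Z hY hZ hbY hbZ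
      refine hint _ (‖f‖ * ‖f‖) (hY.mul hZ) fun ω => ?_
      rw [norm_mul]
      exact mul_le_mul (hbY ω) (hbZ ω) (norm_nonneg _) (le_trans (norm_nonneg _) (hbY ω))
    have hint1 : Integrable Y1 P := hint _ _ (mY1.mono h1m le_rfl) bY1
    have hint3 : Integrable Y3 P := hint _ _ (mY3.mono h3 le_rfl) bY3
    have hint13 : Integrable (Y1 * Y3) P :=
      hintmul _ _ (mY1.mono h1m le_rfl) (mY3.mono h3 le_rfl) bY1 bY3
    have hint11 : Integrable (fun ω => Y1 ω * Y1 ω) P :=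
      hintmul _ _ (mY1.mono h1m le_rfl) (mY1.mono h1m le_rfl) bY1 bY1
    have hint33 : Integrable (fun ω => Y3 ω * Y3 ω) P :=
      hintmul _ _ (mY3.mono h3 le_rfl) (mY3.mono h3 le_rfl) bY3 bY3
    have tower : P[P[Y3|G2]|G1] =ᵐ[P] P[Y3|G1] := condExp_condExp_of_le h12 h2m
    have step1 : P[Y3|G1] =ᵐ[P] Y1 :=
      tower.symm.trans ((condExp_congr_ae (m := G1) (hmart2 f)).trans (hmart1 f))
    have pull : P[Y1 * Y3|G1] =ᵐ[P] Y1 * P[Y3|G1] :=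
      condExp_mul_of_stronglyMeasurable_left mY1.stronglyMeasurable hint13 hint3
    have cross : ∫ ω, Y1 ω * Y3 ω ∂P = ∫ ω, Y1 ω * Y1 ω ∂P := by
      calc ∫ ω, Y1 ω * Y3 ω ∂P
          = ∫ ω, (P[Y1 * Y3|G1]) ω ∂P := (integral_condExp h1m (f := Y1 * Y3)).symm
        _ = ∫ ω, (Y1 * P[Y3|G1]) ω ∂P := integral_congr_ae pull
        _ = ∫ ω, Y1 ω * Y1 ω ∂P := integral_congr_ae (by
              filter_upwards [step1] with ω hω
              simp only [Pi.mul_apply, hω])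
    have hX1 : AEMeasurable X1 P := (hm1.mono h1m le_rfl).aemeasurable
    have hX3 : AEMeasurable X3 P := (hm3.mono h3 le_rfl).aemeasurable
    have hint13' : Integrable (fun ω => Y1 ω * Y3 ω) P := hint13
    have law2 : ∫ ω, Y1 ω * Y1 ω ∂P = ∫ ω, Y3 ω * Y3 ω ∂P := by
      have hg : Continuous (fun p : ProbabilityMeasure 𝒳 =>
          (∫ x, f x ∂(p : Measure 𝒳)) * (∫ x, f x ∂(p : Measure 𝒳))) := φc.mul φc
      have e1 : ∫ ω, Y1 ω * Y1 ω ∂P = ∫ p, (∫ x, f x ∂(p : Measure 𝒳)) * (∫ x, f x ∂(p : Measure 𝒳))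
          ∂(@Measure.map Ω (ProbabilityMeasure 𝒳) mΩ (borel _) X1 P) :=
        (integral_map hX1 hg.aestronglyMeasurable).symm
      have e3 : ∫ p, (∫ x, f x ∂(p : Measure 𝒳)) * (∫ x, f x ∂(p : Measure 𝒳))
          ∂(@Measure.map Ω (ProbabilityMeasure 𝒳) mΩ (borel _) X3 P) = ∫ ω, Y3 ω * Y3 ω ∂P :=
        integral_map hX3 hg.aestronglyMeasurable
      rw [e1, hdist, e3]
    have hintsub : Integrable (fun ω => (Y3 ω - Y1 ω) * (Y3 ω - Y1 ω)) P := by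
      have expand : (fun ω => (Y3 ω - Y1 ω) * (Y3 ω - Y1 ω))
          = fun ω => (Y3 ω * Y3 ω - Y1 ω * Y3 ω) - (Y1 ω * Y3 ω - Y1 ω * Y1 ω) := by
        funext ω; ring
      rw [expand]
      exact (hint33.sub hint13').sub (hint13'.sub hint11)
    have eA : ∫ ω, ((Y3 ω * Y3 ω - Y1 ω * Y3 ω) - (Y1 ω * Y3 ω - Y1 ω * Y1 ω)) ∂P
        = (∫ ω, (Y3 ω * Y3 ω - Y1 ω * Y3 ω) ∂P) - ∫ ω, (Y1 ω * Y3 ω - Y1 ω * Y1 ω) ∂P := by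
      exact integral_sub (hint33.sub hint13') (hint13'.sub hint11)
    have eB : ∫ ω, (Y3 ω * Y3 ω - Y1 ω * Y3 ω) ∂P
        = (∫ ω, Y3 ω * Y3 ω ∂P) - ∫ ω, Y1 ω * Y3 ω ∂P := by
      exact integral_sub hint33 hint13'
    have eC : ∫ ω, (Y1 ω * Y3 ω - Y1 ω * Y1 ω) ∂P
        = (∫ ω, Y1 ω * Y3 ω ∂P) - ∫ ω, Y1 ω * Y1 ω ∂P := by
      exact integral_sub hint13' hint11
    have izero : ∫ ω, (Y3 ω - Y1 ω) * (Y3 ω - Y1 ω) ∂P = 0 := by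
      have expand : ∀ ω, (Y3 ω - Y1 ω) * (Y3 ω - Y1 ω)
          = (Y3 ω * Y3 ω - Y1 ω * Y3 ω) - (Y1 ω * Y3 ω - Y1 ω * Y1 ω) := fun ω => by ring
      simp_rw [expand]
      rw [eA, eB, eC, cross, law2]
      ring
    have h31 : Y3 =ᵐ[P] Y1 := by
      have h := (integral_eq_zero_iff_of_nonneg (fun ω => mul_self_nonneg _) hintsub).mp izero
      filter_upwards [h] with ω hω
      have : Y3 ω - Y1 ω = 0 := mul_self_eq_zero.mp hω
      linarith
    have h21 : Y2 =ᵐ[P] Y1 := by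
      have e : P[Y3|G2] =ᵐ[P] P[Y1|G2] := condExp_congr_ae h31
      have e2 : P[Y1|G2] = Y1 :=
        condExp_of_stronglyMeasurable h2m (mY1.mono h12 le_rfl).stronglyMeasurable hint1
      exact ((hmart2 f).symm.trans e).trans (by rw [e2])
    exact ⟨h21.symm, h31.symm⟩
  letI := TopologicalSpace.upgradeIsCompletelyMetrizable 𝒳
  obtain ⟨S, Sc, Spi, Sclosed, Sgen⟩ := exists_separating (𝒳 := 𝒳)
  have ae_all : ∀ᵐ ω ∂P, ∀ (F : Set 𝒳) (hF : F ∈ S), ∀ n : ℕ,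
      (∫ x, toRealBCF ((Sclosed F hF).apprSeq n) x ∂(X1 ω : Measure 𝒳)
          = ∫ x, toRealBCF ((Sclosed F hF).apprSeq n) x ∂(X2 ω : Measure 𝒳)) ∧
      (∫ x, toRealBCF ((Sclosed F hF).apprSeq n) x ∂(X1 ω : Measure 𝒳)
          = ∫ x, toRealBCF ((Sclosed F hF).apprSeq n) x ∂(X3 ω : Measure 𝒳)) := by
    rw [ae_ball_iff Sc]
    intro F hF
    rw [ae_all_iff]
    intro n
    obtain ⟨k1, k2⟩ := key (toRealBCF ((Sclosed F hF).apprSeq n))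
    filter_upwards [k1, k2] with ω e1 e2 using ⟨e1, e2⟩
  have main : ∀ᵐ ω ∂P, X1 ω = X2 ω ∧ X1 ω = X3 ω := by
    filter_upwards [ae_all] with ω hω
    have e12 : (X1 ω : Measure 𝒳) = (X2 ω : Measure 𝒳) :=
      ext_of_generate_finite S Sgen Spi
        (fun F hF => meas_eq (Sclosed F hF) (fun n => (hω F hF n).1)) (by simp)
    have e13 : (X1 ω : Measure 𝒳) = (X3 ω : Measure 𝒳) :=
      ext_of_generate_finite S Sgen Spi
        (fun F hF => meas_eq (Sclosed F hF) (fun n => (hω F hF n).2)) (by simp)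
    exact ⟨ProbabilityMeasure.toMeasure_injective e12,
      ProbabilityMeasure.toMeasure_injective e13⟩
  refine ⟨main.mono fun ω h => h.1, main.mono fun ω h => h.1 ▸ h.2⟩
end

section
/- Let (M, d) and (M, d') be two metrics on the same set M such that d' ≤ d pointwise, d and d' induce sequential topologies, and every d'-bounded-in-the-sense-of-relative-compactness set (i.e., every d'-relatively compact set) is d-relatively compact. Then d and d' induce the same topology on M. -/
open Filter Topology Set

theorem aux12' {A B : Type*} [MetricSpace A] [MetricSpace B] (e : A ≃ B)
    (hle : ∀ x y : A, dist (e x) (e y) ≤ dist x y) : Continuous (e : A → B) :=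
  (LipschitzWith.mk_one hle).continuous

theorem aux12 {A B : Type*} [MetricSpace A] [MetricSpace B] (e : A ≃ B)
    (hle : ∀ x y : A, dist (e x) (e y) ≤ dist x y)
    (hcomp : ∀ S : Set A, IsCompact (closure (e '' S)) → IsCompact (closure S)) :
    Continuous (e.symm : B → A) := by
  have hcont : Continuous e :=
    (LipschitzWith.of_dist_le_mul (K := 1) (by simpa using hle)).continuous
  rw [continuous_iff_seqContinuous]
  intro u b hu
  set a := e.symm b with ha
  set v : ℕ → A := fun n => e.symm (u n) with hv
  have himg : e '' (insert a (Set.range v)) = insert b (Set.range u) := by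
    rw [Set.image_insert_eq, ← Set.range_comp]
    simp [ha, hv, Function.comp_def]
  have hK' : IsCompact (closure (e '' (insert a (Set.range v)))) := by
    rw [himg]
    rw [(hu.isCompact_insert_range).isClosed.closure_eq]
    exact hu.isCompact_insert_range
  have hK : IsCompact (closure (insert a (Set.range v))) := hcomp _ hK'
  refine tendsto_of_subseq_tendsto fun ns hns => ?_
  obtain ⟨y, hyK, φ, hφ, hφt⟩ := hK.tendsto_subseq
    (x := fun n => v (ns n)) (fun n => subset_closure (Set.mem_insert_iff.2
      (Or.inr (Set.mem_range_self _))))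
  have h1 : Tendsto (fun n => u (ns (φ n))) atTop (𝓝 (e y)) := by
    have := (hcont.tendsto y).comp hφt
    simpa [hv, Function.comp_def] using this
  have h2 : Tendsto (fun n => u (ns (φ n))) atTop (𝓝 b) :=
    hu.comp (hns.comp hφ.tendsto_atTop)
  have hey : e y = b := tendsto_nhds_unique h1 h2
  have hya : y = a := by rw [ha, ← hey, Equiv.symm_apply_apply]
  exact ⟨φ, by simpa [hya, hv, Function.comp_def] using hφt⟩

/-- Two metrics with d' ≤ d, such that every d'-relatively compact set is
d-relatively compact, induce the same topology. -/
theorem stmt12 {M : Type*} (m m' : MetricSpace M)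
    (hle : ∀ x y : M, m'.toPseudoMetricSpace.toDist.dist x y ≤
      m.toPseudoMetricSpace.toDist.dist x y)
    (hcomp : ∀ S : Set M,
      @IsCompact M m'.toUniformSpace.toTopologicalSpace
        (@closure M m'.toUniformSpace.toTopologicalSpace S) →
      @IsCompact M m.toUniformSpace.toTopologicalSpace
        (@closure M m.toUniformSpace.toTopologicalSpace S)) :
    m.toUniformSpace.toTopologicalSpace = m'.toUniformSpace.toTopologicalSpace := by
  have h := @aux12 M M m m' (Equiv.refl M) hle (fun S hS => hcomp S (by simpa using hS))
  have hcont := @aux12' M M m m' (Equiv.refl M) hle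
  have h1 : m.toUniformSpace.toTopologicalSpace ≤ m'.toUniformSpace.toTopologicalSpace :=
    continuous_id_iff_le.mp (by simpa using hcont)
  have h2 : m'.toUniformSpace.toTopologicalSpace ≤ m.toUniformSpace.toTopologicalSpace :=
    continuous_id_iff_le.mp (by simpa using h)
  exact le_antisymm h1 h2
end

section
/- The convex order on probability measures on ℝ^d with finite first moment is antisymmetric: if μ ≤_cx ν and ν ≤_cx μ, then μ = ν. -/
open MeasureTheory Metric Set Filter
open scoped Topology

section Aux

variable {E : Type*} [NormedAddCommGroup E] [NormedSpace ℝ E]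

lemma aux_convexOn_infDist (K : Set E) (hK : Convex ℝ K) (hne : K.Nonempty) :
    ConvexOn ℝ Set.univ (fun x => Metric.infDist x K) := by
  refine ⟨convex_univ, fun x _ y _ a b ha hb hab => ?_⟩
  refine le_of_forall_pos_le_add fun ε hε => ?_
  obtain ⟨p, hpK, hp⟩ := (Metric.infDist_lt_iff hne).1
    (lt_add_of_pos_right (Metric.infDist x K) hε)
  obtain ⟨q, hqK, hq⟩ := (Metric.infDist_lt_iff hne).1
    (lt_add_of_pos_right (Metric.infDist y K) hε)
  have hmem : a • p + b • q ∈ K := hK hpK hqK ha hb hab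
  calc Metric.infDist (a • x + b • y) K ≤ dist (a • x + b • y) (a • p + b • q) :=
        Metric.infDist_le_dist_of_mem hmem
    _ ≤ dist (a • x) (a • p) + dist (b • y) (b • q) := dist_add_add_le _ _ _ _
    _ = a * dist x p + b * dist y q := by
        rw [dist_smul₀, dist_smul₀, Real.norm_of_nonneg ha, Real.norm_of_nonneg hb]
    _ ≤ a * (Metric.infDist x K + ε) + b * (Metric.infDist y K + ε) := by
        have h1 := mul_le_mul_of_nonneg_left hp.le ha
        have h2 := mul_le_mul_of_nonneg_left hq.le hb
        linarith
    _ = a • Metric.infDist x K + b • Metric.infDist y K + ε := by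
        simp only [smul_eq_mul]; nlinarith

end Aux

/-- The convex order on probability measures on ℝ^d with finite first moment
is antisymmetric. -/
theorem stmt16 (d : ℕ)
    (μ ν : Measure (EuclideanSpace ℝ (Fin d)))
    [IsProbabilityMeasure μ] [IsProbabilityMeasure ν]
    (hμ : Integrable (fun x => ‖x‖) μ) (hν : Integrable (fun x => ‖x‖) ν)
    (h1 : ∀ f : EuclideanSpace ℝ (Fin d) → ℝ, ConvexOn ℝ Set.univ f →
      Integrable f μ → Integrable f ν → ∫ x, f x ∂μ ≤ ∫ x, f x ∂ν)
    (h2 : ∀ f : EuclideanSpace ℝ (Fin d) → ℝ, ConvexOn ℝ Set.univ f →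
      Integrable f μ → Integrable f ν → ∫ x, f x ∂ν ≤ ∫ x, f x ∂μ) :
    μ = ν := by
  set E := EuclideanSpace ℝ (Fin d)
  -- integrals of convex integrable functions agree
  have heq : ∀ f : E → ℝ, ConvexOn ℝ Set.univ f →
      Integrable f μ → Integrable f ν → ∫ x, f x ∂μ = ∫ x, f x ∂ν :=
    fun f hf hfμ hfν => le_antisymm (h1 f hf hfμ hfν) (h2 f hf hfμ hfν)
  -- Step 1: μ and ν agree on nonempty closed convex sets
  have key : ∀ K : Set E, IsClosed K → Convex ℝ K → K.Nonempty → μ K = ν K := by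
    intro K hKc hKv hne
    set f : E → ℝ := fun x => Metric.infDist x K with hf
    have hf_conv : ConvexOn ℝ Set.univ f := aux_convexOn_infDist K hKv hne
    have hf_cont : Continuous f := (lipschitz_infDist_pt K).continuous
    have hf_nonneg : ∀ x, 0 ≤ f x := fun x => Metric.infDist_nonneg
    have hf_bound : ∀ x : E, |f x| ≤ f 0 + ‖x‖ := by
      intro x
      rw [abs_of_nonneg (hf_nonneg x)]
      have h := (lipschitz_infDist_pt K).dist_le_mul x 0
      simp only [NNReal.coe_one, one_mul, Real.dist_eq] at h
      have h2' : f x - f 0 ≤ dist x 0 := (abs_le.1 h).2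
      rw [dist_zero_right] at h2'
      linarith
    have hf_int : ∀ (m : Measure E) [IsProbabilityMeasure m],
        Integrable (fun x => ‖x‖) m → Integrable f m := by
      intro m _ hm
      refine Integrable.mono ((integrable_const (f 0)).add hm)
        hf_cont.aestronglyMeasurable (Filter.Eventually.of_forall fun x => ?_)
      have h0 : (0:ℝ) ≤ f 0 := hf_nonneg 0
      have := hf_bound x
      simp only [Real.norm_eq_abs, Pi.add_apply]
      rw [abs_of_nonneg (by positivity : (0:ℝ) ≤ f 0 + ‖x‖)]
      simpa using this
    have hfμ : Integrable f μ := hf_int μ hμ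
    have hfν : Integrable f ν := hf_int ν hν
    have hint_f : ∫ x, f x ∂μ = ∫ x, f x ∂ν := heq f hf_conv hfμ hfν
    -- the "call" functions
    have hcall_conv : ∀ n : ℕ, ConvexOn ℝ Set.univ (fun x => max ((n:ℝ) * f x - 1) 0) := by
      intro n
      have h1' : ConvexOn ℝ Set.univ (fun x => (n:ℝ) * f x - 1) := by
        have hs := hf_conv.smul (c := (n:ℝ)) (Nat.cast_nonneg n)
        refine ⟨convex_univ, fun x hx y hy a b ha hb hab => ?_⟩
        have := hs.2 hx hy ha hb hab
        simp only [smul_eq_mul] at this ⊢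
        nlinarith
      exact h1'.sup (convexOn_const 0 convex_univ)
    have hcall_int : ∀ (n : ℕ) (m : Measure E) [IsProbabilityMeasure m],
        Integrable (fun x => ‖x‖) m → Integrable (fun x => max ((n:ℝ) * f x - 1) 0) m := by
      intro n m _ hm
      have hfm : Integrable f m := hf_int m hm
      refine Integrable.mono (hfm.const_mul (n:ℝ))
        ((hf_cont.const_smul ((n:ℝ)) |>.sub continuous_const).max continuous_const).aestronglyMeasurable
        (Filter.Eventually.of_forall fun x => ?_)
      simp only [Real.norm_eq_abs]
      rw [abs_of_nonneg (le_max_right _ _)]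
      rcases le_total ((n:ℝ) * f x - 1) 0 with h | h
      · rw [max_eq_right h]; positivity
      · rw [max_eq_left h]
        have : (0:ℝ) ≤ (n:ℝ) * f x := mul_nonneg (Nat.cast_nonneg n) (hf_nonneg x)
        rw [abs_of_nonneg this]; linarith
    have hint_call : ∀ n : ℕ,
        ∫ x, max ((n:ℝ) * f x - 1) 0 ∂μ = ∫ x, max ((n:ℝ) * f x - 1) 0 ∂ν :=
      fun n => heq _ (hcall_conv n) (hcall_int n μ hμ) (hcall_int n ν hν)
    -- g n x = max (1 - n f x) 0
    set g : ℕ → E → ℝ := fun n x => max (1 - (n:ℝ) * f x) 0 with hg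
    have hg_id : ∀ (n : ℕ) (x : E),
        g n x = 1 - (n:ℝ) * f x + max ((n:ℝ) * f x - 1) 0 := by
      intro n x
      rcases le_total ((n:ℝ) * f x) 1 with h | h
      · simp only [hg]
        rw [max_eq_left (by linarith), max_eq_right (by linarith)]; ring
      · simp only [hg]
        rw [max_eq_right (by linarith), max_eq_left (by linarith)]; ring
    have hg_int_eq : ∀ n : ℕ, ∫ x, g n x ∂μ = ∫ x, g n x ∂ν := by
      intro n
      have expand : ∀ (m : Measure E) [IsProbabilityMeasure m],
          Integrable (fun x => ‖x‖) m →
          ∫ x, g n x ∂m = 1 - (n:ℝ) * ∫ x, f x ∂m + ∫ x, max ((n:ℝ) * f x - 1) 0 ∂m := by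
        intro m _ hm
        have hfm : Integrable f m := hf_int m hm
        calc ∫ x, g n x ∂m
            = ∫ x, (1 - (n:ℝ) * f x + max ((n:ℝ) * f x - 1) 0) ∂m :=
              integral_congr_ae (Filter.Eventually.of_forall fun x => hg_id n x)
          _ = ∫ x, (1 - (n:ℝ) * f x) ∂m + ∫ x, max ((n:ℝ) * f x - 1) 0 ∂m :=
              integral_add ((integrable_const 1).sub (hfm.const_mul _)) (hcall_int n m hm)
          _ = 1 - (n:ℝ) * ∫ x, f x ∂m + ∫ x, max ((n:ℝ) * f x - 1) 0 ∂m := by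
              rw [integral_sub (integrable_const 1) (hfm.const_mul _), integral_const,
                integral_const_mul]
              simp
      rw [expand μ hμ, expand ν hν, hint_f, hint_call n]
    -- dominated convergence
    have hKm : MeasurableSet K := hKc.measurableSet
    have htendsto : ∀ (m : Measure E) [IsProbabilityMeasure m],
        Tendsto (fun n => ∫ x, g n x ∂m) atTop (𝓝 ((m K).toReal)) := by
      intro m _
      have := integral_indicator_one (μ := m) hKm
      rw [show (m K).toReal = m.real K from rfl, ← this]
      refine tendsto_integral_of_dominated_convergence (fun _ => 1) ?_ (integrable_const 1) ?_ ?_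
      · intro n
        exact ((continuous_const.sub (hf_cont.const_smul ((n:ℝ)))).max
          continuous_const).aestronglyMeasurable
      · intro n
        refine Filter.Eventually.of_forall fun x => ?_
        simp only [Real.norm_eq_abs]
        rw [abs_of_nonneg (le_max_right _ _)]
        simp only [hg]
        rcases le_total (1 - (n:ℝ) * f x) 0 with h | h
        · rw [max_eq_right h]; norm_num
        · rw [max_eq_left h]
          have : (0:ℝ) ≤ (n:ℝ) * f x := mul_nonneg (Nat.cast_nonneg n) (hf_nonneg x)
          linarith
      · refine Filter.Eventually.of_forall fun x => ?_
        by_cases hx : x ∈ K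
        · have hfx : f x = 0 := Metric.infDist_zero_of_mem hx
          have : ∀ n : ℕ, g n x = 1 := by
            intro n; simp only [hg, hfx]; simp
          rw [Set.indicator_of_mem hx]
          simp only [Pi.one_apply]
          simpa [this] using tendsto_const_nhds
        · have hfx : 0 < f x := (hKc.notMem_iff_infDist_pos hne).1 hx
          rw [Set.indicator_of_notMem hx]
          have hev : ∀ᶠ n : ℕ in atTop, g n x = 0 := by
            obtain ⟨N, hN⟩ := exists_nat_gt (1 / f x)
            refine Filter.eventually_atTop.2 ⟨N, fun n hn => ?_⟩
            have h1' : 1 / f x < (n:ℝ) := lt_of_lt_of_le hN (by exact_mod_cast hn)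
            have : 1 < (n:ℝ) * f x := by
              rw [div_lt_iff₀ hfx] at h1'
              linarith
            simp only [hg]
            rw [max_eq_right (by linarith)]
          exact Tendsto.congr' (hev.mono fun n h => h.symm) tendsto_const_nhds
    have hlim : (μ K).toReal = (ν K).toReal := by
      have t1 := htendsto μ
      have t2 := htendsto ν
      have t1' : Tendsto (fun n => ∫ x, g n x ∂μ) atTop (𝓝 ((ν K).toReal)) := by
        refine Tendsto.congr (fun n => (hg_int_eq n).symm) t2
      exact tendsto_nhds_unique t1 t1'
    exact (ENNReal.toReal_eq_toReal_iff' (measure_ne_top μ K) (measure_ne_top ν K)).1 hlim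
  -- Step 2: closed convex sets generate the Borel σ-algebra and form a π-system
  set C : Set (Set E) := {s | IsClosed s ∧ Convex ℝ s} with hC
  have hPi : IsPiSystem C := by
    intro s hs t ht _
    exact ⟨hs.1.inter ht.1, hs.2.inter ht.2⟩
  have hgen : (inferInstance : MeasurableSpace E) = MeasurableSpace.generateFrom C := by
    refine le_antisymm ?_ (MeasurableSpace.generateFrom_le fun s hs => hs.1.measurableSet)
    rw [BorelSpace.measurable_eq (α := E)]
    have hb : borel E = MeasurableSpace.generateFrom {s : Set E | IsOpen s} := rfl
    rw [hb]
    refine MeasurableSpace.generateFrom_le fun U hU => ?_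
    -- every open set is a countable union of closed balls
    have hball : ∀ (c : E) (r : ℝ), MeasurableSet[MeasurableSpace.generateFrom C]
        (Metric.ball c r) := by
      intro c r
      have : Metric.ball c r = ⋃ n : ℕ, Metric.closedBall c (r - 1 / (n + 1)) := by
        ext y
        simp only [Metric.mem_ball, Metric.mem_closedBall, Set.mem_iUnion]
        constructor
        · intro h
          obtain ⟨n, hn⟩ := exists_nat_one_div_lt (show (0:ℝ) < r - dist y c by linarith)
          exact ⟨n, by push_cast at hn ⊢; linarith⟩
        · rintro ⟨n, hn⟩
          have : (0:ℝ) < 1 / ((n:ℝ) + 1) := by positivity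
          linarith
      rw [this]
      exact MeasurableSet.iUnion fun n =>
        MeasurableSpace.measurableSet_generateFrom
          ⟨Metric.isClosed_closedBall, convex_closedBall c _⟩
    have hUo : IsOpen U := hU
    choose! r hr hsub using fun (x : E) (hx : x ∈ U) => Metric.isOpen_iff.1 hUo x hx
    have hU_eq : U = ⋃ x : U, Metric.ball (x : E) (r x) := by
      apply Set.Subset.antisymm
      · intro x hx
        exact Set.mem_iUnion.2 ⟨⟨x, hx⟩, Metric.mem_ball_self (hr x hx)⟩
      · refine Set.iUnion_subset fun x => hsub x x.2
    obtain ⟨T, hTc, hTU⟩ := TopologicalSpace.isOpen_iUnion_countable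
      (fun x : U => Metric.ball (x : E) (r x)) (fun x => Metric.isOpen_ball)
    rw [hU_eq, ← hTU]
    exact MeasurableSet.biUnion hTc fun x _ => hball _ _
  -- Step 3: conclude
  refine MeasureTheory.ext_of_generate_finite C hgen hPi ?_ ?_
  · intro s hs
    rcases Set.eq_empty_or_nonempty s with rfl | hne
    · simp
    · exact key s hs.1 hs.2 hne
  · simp [measure_univ]
end
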